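/- Fix n ∈ ℕ, p ∈ [1, ∞) and α ∈ ℝ. Then for every h ∈ L_p^0({−1,1}^n) and every S ⊆ [n], ‖E_{[n]∖S} h‖_p ≤ ‖Δ_S^α Δ_{[n]}^{−α} h‖_p. -/

import Mathlib

open Finset
open scoped symmDiff

/-- The normalized `L_p` norm of a function on the discrete hypercube `{-1,1}^n`
(coordinates encoded by `Bool`). -/
noncomputable def pnorm {n : ℕ} (p : ℝ) (h : (Fin n → Bool) → ℝ) : ℝ :=
  ((∑ ε : Fin n → Bool, |h ε| ^ p) / 2 ^ n) ^ (1 / p)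

/-- The Walsh function `W_A(ε) = Π_{j ∈ A} ε_j`. -/
def walsh {n : ℕ} (A : Finset (Fin n)) (ε : Fin n → Bool) : ℝ :=
  ∏ j ∈ A, (if ε j then (1 : ℝ) else -1)

/-- The Fourier–Walsh coefficient `ĥ(A) = 2^{-n} Σ_ε h(ε) W_A(ε)`. -/
noncomputable def fourierCoef {n : ℕ} (h : (Fin n → Bool) → ℝ) (A : Finset (Fin n)) : ℝ :=
  (∑ ε : Fin n → Bool, h ε * walsh A ε) / 2 ^ n

/-- `Δ_S^α h = Σ_{A ∩ S ≠ ∅} |A ∩ S|^α ĥ(A) W_A`. -/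
noncomputable def deltaPow {n : ℕ} (S : Finset (Fin n)) (α : ℝ) (h : (Fin n → Bool) → ℝ) :
    (Fin n → Bool) → ℝ :=
  fun ε => ∑ A : Finset (Fin n),
    if (A ∩ S).Nonempty then ((A ∩ S).card : ℝ) ^ α * fourierCoef h A * walsh A ε else 0

/-- `E_S h`: averaging of `h` over the coordinates in `S`. -/
noncomputable def condAvg {n : ℕ} (S : Finset (Fin n)) (h : (Fin n → Bool) → ℝ) :
    (Fin n → Bool) → ℝ :=
  fun ε => (∑ δ : Fin n → Bool, h (fun j => if j ∈ S then δ j else ε j)) / 2 ^ n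

lemma walsh_eq_prod_univ {n : ℕ} (A : Finset (Fin n)) (ε : Fin n → Bool) :
    walsh A ε = ∏ j : Fin n, (if j ∈ A then (if ε j then (1:ℝ) else -1) else 1) := by
  rw [walsh, Finset.prod_ite_mem, univ_inter]

lemma sum_walsh {n : ℕ} (A : Finset (Fin n)) :
    ∑ ε : Fin n → Bool, walsh A ε = if A = ∅ then (2:ℝ)^n else 0 := by
  simp_rw [walsh_eq_prod_univ]
  rw [← Fintype.piFinset_univ]
  set g : Fin n → Bool → ℝ := fun j b => if j ∈ A then (if b then (1:ℝ) else -1) else 1 with hg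
  show (∑ x ∈ Fintype.piFinset fun _ : Fin n => (univ : Finset Bool), ∏ j, g j (x j)) = _
  rw [Finset.sum_prod_piFinset (univ : Finset Bool) g]
  simp only [hg]
  have : ∀ j : Fin n, (∑ b : Bool, if j ∈ A then (if b then (1:ℝ) else -1) else 1)
      = if j ∈ A then 0 else 2 := by
    intro j; by_cases hj : j ∈ A <;> simp [hj]
  simp_rw [this]
  by_cases hA : A = ∅
  · simp [hA]
  · rw [if_neg hA]
    obtain ⟨i, hi⟩ := Finset.nonempty_iff_ne_empty.2 hA
    exact Finset.prod_eq_zero (mem_univ i) (by simp [hi])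

lemma walsh_mul {n : ℕ} (A B : Finset (Fin n)) (ε : Fin n → Bool) :
    walsh A ε * walsh B ε = walsh (A ∆ B) ε := by
  rw [walsh_eq_prod_univ, walsh_eq_prod_univ, walsh_eq_prod_univ, ← Finset.prod_mul_distrib]
  refine Finset.prod_congr rfl fun j _ => ?_
  by_cases hA : j ∈ A <;> by_cases hB : j ∈ B <;>
    simp [Finset.mem_symmDiff, hA, hB] <;> cases ε j <;> norm_num

lemma sum_walsh_mul {n : ℕ} (A B : Finset (Fin n)) :
    ∑ ε : Fin n → Bool, walsh A ε * walsh B ε = if A = B then (2:ℝ)^n else 0 := by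
  simp_rw [walsh_mul, sum_walsh]
  congr 1
  simp [← Finset.bot_eq_empty, symmDiff_eq_bot, eq_iff_iff]

lemma fourierCoef_sum_walsh {n : ℕ} (c : Finset (Fin n) → ℝ) (A : Finset (Fin n)) :
    fourierCoef (fun ε => ∑ B : Finset (Fin n), c B * walsh B ε) A = c A := by
  unfold fourierCoef
  simp_rw [Finset.sum_mul]
  rw [Finset.sum_comm]
  simp_rw [mul_assoc, ← Finset.mul_sum, sum_walsh_mul, mul_ite, mul_zero]
  rw [Finset.sum_ite_eq' univ A (fun B => c B * (2:ℝ)^n), if_pos (mem_univ A)]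
  field_simp

lemma sum_walsh_walsh {n : ℕ} (δ ε : Fin n → Bool) :
    ∑ A : Finset (Fin n), walsh A δ * walsh A ε = if δ = ε then (2:ℝ)^n else 0 := by
  have h1 : ∀ A : Finset (Fin n), walsh A δ * walsh A ε
      = ∏ j ∈ A, ((if δ j then (1:ℝ) else -1) * (if ε j then (1:ℝ) else -1)) := by
    intro A; rw [walsh, walsh, Finset.prod_mul_distrib]
  simp_rw [h1]
  have h2 : ∑ A : Finset (Fin n), ∏ j ∈ A,
      ((if δ j then (1:ℝ) else -1) * (if ε j then (1:ℝ) else -1))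
      = ∏ j : Fin n, (((if δ j then (1:ℝ) else -1) * (if ε j then (1:ℝ) else -1)) + 1) := by
    rw [Finset.prod_add]
    simp [Finset.powerset_univ]
  rw [h2]
  have h3 : ∀ j : Fin n, ((if δ j then (1:ℝ) else -1) * (if ε j then (1:ℝ) else -1)) + 1
      = if δ j = ε j then 2 else 0 := by
    intro j; cases hd : δ j <;> cases he : ε j <;> norm_num
  simp_rw [h3]
  by_cases hde : δ = ε
  · subst hde; simp
  · rw [if_neg hde]
    obtain ⟨i, hi⟩ : ∃ i, δ i ≠ ε i := by
      by_contra hc; push_neg at hc; exact hde (funext hc)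
    exact Finset.prod_eq_zero (mem_univ i) (by simp [hi])

lemma fourier_inversion {n : ℕ} (h : (Fin n → Bool) → ℝ) (ε : Fin n → Bool) :
    ∑ A : Finset (Fin n), fourierCoef h A * walsh A ε = h ε := by
  unfold fourierCoef
  simp_rw [div_mul_eq_mul_div, ← Finset.sum_div, Finset.sum_mul]
  rw [Finset.sum_comm]
  simp_rw [mul_assoc, ← Finset.mul_sum, sum_walsh_walsh, mul_ite, mul_zero]
  rw [Finset.sum_ite_eq' univ ε (fun δ => h δ * (2:ℝ)^n), if_pos (mem_univ ε)]
  field_simp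

lemma sum_sum_mix {n : ℕ} (T : Finset (Fin n)) (F : (Fin n → Bool) → (Fin n → Bool) → ℝ) :
    ∑ ε : Fin n → Bool, ∑ δ : Fin n → Bool, F (fun j => if j ∈ T then δ j else ε j) ε
      = ∑ σ : Fin n → Bool, ∑ τ : Fin n → Bool, F σ (fun j => if j ∈ T then τ j else σ j) := by
  have hinv : Function.Involutive
      (fun x : (Fin n → Bool) × (Fin n → Bool) =>
        ((fun j => if j ∈ T then x.2 j else x.1 j),
         (fun j => if j ∈ T then x.1 j else x.2 j))) := by
    intro x
    refine Prod.ext (funext fun j => ?_) (funext fun j => ?_) <;> by_cases hj : j ∈ T <;> simp [hj]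
  have e1 := Fintype.sum_prod_type
    (f := fun x : (Fin n → Bool) × (Fin n → Bool) =>
      F (fun j => if j ∈ T then x.2 j else x.1 j) x.1)
  have e2 := Fintype.sum_prod_type
    (f := fun x : (Fin n → Bool) × (Fin n → Bool) =>
      F x.1 (fun j => if j ∈ T then x.2 j else x.1 j))
  rw [← e1, ← e2]
  rw [← Equiv.sum_comp hinv.toPerm
    (fun x : (Fin n → Bool) × (Fin n → Bool) => F x.1 (fun j => if j ∈ T then x.2 j else x.1 j))]
  refine Finset.sum_congr rfl fun x _ => ?_
  simp only [Function.Involutive.coe_toPerm]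
  congr 1
  funext j; by_cases hj : j ∈ T <;> simp [hj]

lemma walsh_mix {n : ℕ} (A T : Finset (Fin n)) (σ τ : Fin n → Bool) :
    walsh A (fun j => if j ∈ T then τ j else σ j) = walsh (A ∩ T) τ * walsh (A \ T) σ := by
  rw [walsh, walsh, walsh, ← Finset.prod_inter_mul_prod_diff A T]
  congr 1
  · refine Finset.prod_congr rfl fun j hj => ?_
    rw [if_pos (Finset.mem_inter.1 hj).2]
  · refine Finset.prod_congr rfl fun j hj => ?_
    rw [if_neg (Finset.mem_sdiff.1 hj).2]

lemma fourierCoef_condAvg {n : ℕ} (T : Finset (Fin n)) (g : (Fin n → Bool) → ℝ)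
    (A : Finset (Fin n)) :
    fourierCoef (condAvg T g) A = if A ∩ T = ∅ then fourierCoef g A else 0 := by
  unfold fourierCoef condAvg
  simp_rw [div_mul_eq_mul_div, ← Finset.sum_div, Finset.sum_mul]
  rw [sum_sum_mix T (fun a b => g a * walsh A b)]
  simp_rw [walsh_mix]
  have : ∀ σ : Fin n → Bool, ∑ τ : Fin n → Bool, g σ * (walsh (A ∩ T) τ * walsh (A \ T) σ)
      = g σ * walsh (A \ T) σ * (if A ∩ T = ∅ then (2:ℝ)^n else 0) := by
    intro σ
    rw [← Finset.mul_sum]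
    conv_lhs => rw [show (∑ τ : Fin n → Bool, walsh (A ∩ T) τ * walsh (A \ T) σ)
      = (∑ τ : Fin n → Bool, walsh (A ∩ T) τ) * walsh (A \ T) σ by rw [Finset.sum_mul]]
    rw [sum_walsh]; ring
  simp_rw [this]
  by_cases hAT : A ∩ T = ∅
  · rw [if_pos hAT]
    have hAd : A \ T = A := by
      rw [Finset.sdiff_eq_self_iff_disjoint, Finset.disjoint_iff_inter_eq_empty]; exact hAT
    rw [hAd, if_pos hAT, ← Finset.sum_mul, mul_div_assoc, mul_div_assoc,
      div_self (by positivity : ((2:ℝ)^n) ≠ 0), mul_one_div]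
  · simp [hAT]

lemma fourierCoef_deltaPow {n : ℕ} (S : Finset (Fin n)) (α : ℝ) (g : (Fin n → Bool) → ℝ)
    (A : Finset (Fin n)) :
    fourierCoef (deltaPow S α g) A
      = if (A ∩ S).Nonempty then ((A ∩ S).card : ℝ) ^ α * fourierCoef g A else 0 := by
  have : deltaPow S α g = fun ε => ∑ B : Finset (Fin n),
      (if (B ∩ S).Nonempty then ((B ∩ S).card : ℝ) ^ α * fourierCoef g B else 0) * walsh B ε := by
    funext ε
    refine Finset.sum_congr rfl fun B _ => ?_
    split <;> simp
  rw [this, fourierCoef_sum_walsh]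

lemma card_fun_bool (n : ℕ) : (Fintype.card (Fin n → Bool)) = 2 ^ n := by simp

lemma pnorm_condAvg_le {n : ℕ} (p : ℝ) (hp : 1 ≤ p) (T : Finset (Fin n))
    (g : (Fin n → Bool) → ℝ) : pnorm p (condAvg T g) ≤ pnorm p g := by
  have hp0 : (0:ℝ) < p := lt_of_lt_of_le one_pos hp
  have h2 : (0:ℝ) < 2 ^ n := by positivity
  have key : ∀ ε : Fin n → Bool, |condAvg T g ε| ^ p
      ≤ (∑ δ : Fin n → Bool, |g (fun j => if j ∈ T then δ j else ε j)| ^ p) / 2 ^ n := by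
    intro ε
    have habs : |condAvg T g ε|
        ≤ ∑ δ : Fin n → Bool, (1 / 2 ^ n) * |g (fun j => if j ∈ T then δ j else ε j)| := by
      unfold condAvg
      rw [abs_div, abs_of_pos h2, div_le_iff₀ h2]
      calc |∑ δ : Fin n → Bool, g (fun j => if j ∈ T then δ j else ε j)|
          ≤ ∑ δ : Fin n → Bool, |g (fun j => if j ∈ T then δ j else ε j)| :=
            Finset.abs_sum_le_sum_abs _ _
        _ = (∑ δ : Fin n → Bool,
              (1 / 2 ^ n) * |g (fun j => if j ∈ T then δ j else ε j)|) * 2 ^ n := by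
            rw [Finset.sum_mul]
            refine Finset.sum_congr rfl fun δ _ => ?_
            field_simp
    have hmean := Real.rpow_arith_mean_le_arith_mean_rpow univ
      (fun _ : Fin n → Bool => 1 / 2 ^ n)
      (fun δ : Fin n → Bool => |g (fun j => if j ∈ T then δ j else ε j)|)
      (fun i _ => by positivity)
      (by rw [Finset.sum_const, card_univ, card_fun_bool, nsmul_eq_mul, Nat.cast_pow, Nat.cast_ofNat]; field_simp)
      (fun i _ => abs_nonneg _) hp
    calc |condAvg T g ε| ^ p
        ≤ (∑ δ : Fin n → Bool, (1 / 2 ^ n) * |g (fun j => if j ∈ T then δ j else ε j)|) ^ p := by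
          apply Real.rpow_le_rpow (abs_nonneg _) habs (le_of_lt hp0)
      _ ≤ ∑ δ : Fin n → Bool, (1 / 2 ^ n) * |g (fun j => if j ∈ T then δ j else ε j)| ^ p := hmean
      _ = (∑ δ : Fin n → Bool, |g (fun j => if j ∈ T then δ j else ε j)| ^ p) / 2 ^ n := by
          rw [Finset.sum_div]
          refine Finset.sum_congr rfl fun δ _ => ?_
          field_simp
  have hsum : ∑ ε : Fin n → Bool, |condAvg T g ε| ^ p ≤ ∑ ε : Fin n → Bool, |g ε| ^ p := by
    calc ∑ ε : Fin n → Bool, |condAvg T g ε| ^ p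
        ≤ ∑ ε : Fin n → Bool,
            (∑ δ : Fin n → Bool, |g (fun j => if j ∈ T then δ j else ε j)| ^ p) / 2 ^ n :=
          Finset.sum_le_sum fun ε _ => key ε
      _ = (∑ ε : Fin n → Bool,
            ∑ δ : Fin n → Bool, |g (fun j => if j ∈ T then δ j else ε j)| ^ p) / 2 ^ n := by
          rw [Finset.sum_div]
      _ = (∑ σ : Fin n → Bool, ∑ _τ : Fin n → Bool, |g σ| ^ p) / 2 ^ n := by
          rw [sum_sum_mix T (fun a _ => |g a| ^ p)]
      _ = ∑ ε : Fin n → Bool, |g ε| ^ p := by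
          simp_rw [Finset.sum_const, card_univ, card_fun_bool, nsmul_eq_mul]
          rw [← Finset.mul_sum, Nat.cast_pow, Nat.cast_ofNat]
          field_simp
  unfold pnorm
  apply Real.rpow_le_rpow
  · apply div_nonneg _ (le_of_lt h2)
    exact Finset.sum_nonneg fun ε _ => Real.rpow_nonneg (abs_nonneg _) p
  · exact div_le_div_of_nonneg_right hsum (le_of_lt h2)
  · positivity

/-- **Lemma 3.3**: for `n ∈ ℕ`, `p ∈ [1,∞)`, `α ∈ ℝ`, every mean-zero `h : {-1,1}^n → ℝ` and
`S ⊆ [n]` satisfy `‖E_{[n]∖S} h‖_p ≤ ‖Δ_S^α Δ_{[n]}^{-α} h‖_p`. -/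
theorem condAvg_pnorm_le_deltaPow (n : ℕ) (p : ℝ) (hp : 1 ≤ p) (α : ℝ)
    (h : (Fin n → Bool) → ℝ) (hmean : (∑ ε : Fin n → Bool, h ε) = 0)
    (S : Finset (Fin n)) :
    pnorm p (condAvg Sᶜ h) ≤
      pnorm p (deltaPow S α (deltaPow (univ : Finset (Fin n)) (-α) h)) := by
  set f := deltaPow S α (deltaPow (univ : Finset (Fin n)) (-α) h) with hf
  have key : condAvg Sᶜ h = condAvg Sᶜ f := by
    funext ε
    rw [← fourier_inversion (condAvg Sᶜ h) ε, ← fourier_inversion (condAvg Sᶜ f) ε]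
    refine Finset.sum_congr rfl fun A _ => ?_
    congr 1
    rw [fourierCoef_condAvg, fourierCoef_condAvg, hf, fourierCoef_deltaPow,
      fourierCoef_deltaPow]
    by_cases hA : A ∩ Sᶜ = ∅
    · rw [if_pos hA, if_pos hA]
      have hAS : A ∩ S = A := by
        ext j
        simp only [Finset.mem_inter, and_iff_left_iff_imp]
        intro hjA
        by_contra hjS
        have : j ∈ A ∩ Sᶜ := Finset.mem_inter.2 ⟨hjA, Finset.mem_compl.2 hjS⟩
        rw [hA] at this
        exact absurd this (Finset.notMem_empty j)
      rw [hAS, Finset.inter_univ]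
      by_cases hne : A.Nonempty
      · rw [if_pos hne, if_pos hne]
        have hc : (0:ℝ) < A.card := by exact_mod_cast Finset.card_pos.2 hne
        have hmul : ((A.card : ℝ)) ^ α * ((A.card : ℝ)) ^ (-α) = 1 := by
          rw [← Real.rpow_add hc]; simp
        rw [← mul_assoc, hmul, one_mul]
      · rw [if_neg hne]
        have hAe : A = ∅ := Finset.not_nonempty_iff_eq_empty.1 hne
        subst hAe
        unfold fourierCoef
        simp [walsh, hmean]
    · rw [if_neg hA, if_neg hA]
  rw [key]
  exact pnorm_condAvg_le p hp Sᶜ f
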